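/- Let g(π) denote the total number of indices that are peaks or valleys of π. For every permutation π, g(π) ≤ g(SC_{321}(π)). -/

import Mathlib

open List Finset

attribute [local instance] Classical.propDecidable

/-- Two lists (with distinct entries) have the same relative order. -/
def SameRel (u v : List ℕ) : Prop :=
  u.length = v.length ∧ ∀ i j, i < j → j < u.length →
    (u.getD i 0 < u.getD j 0 ↔ v.getD i 0 < v.getD j 0)

/-- `l` contains `σ` as a classical pattern. -/
def ContainsPat (l σ : List ℕ) : Prop := ∃ u, u.Sublist l ∧ SameRel u σ

/-- `l` contains `σ` as a consecutive pattern. -/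
def ContainsC (l σ : List ℕ) : Prop := ∃ u, u.IsInfix l ∧ SameRel u σ

/-- `l` avoids `σ` as a classical pattern. -/
def AvoidsPat (l σ : List ℕ) : Prop := ¬ ContainsPat l σ

/-- `l` avoids `σ` as a consecutive pattern. -/
def AvoidsC (l σ : List ℕ) : Prop := ¬ ContainsC l σ

/-- Generic right-greedy stack-sorting: push the next entry unless doing so creates a
`bad` stack (read top to bottom); otherwise pop the top of the stack to the output. -/
noncomputable def stackAux (bad : List ℕ → Prop) : List ℕ → List ℕ → List ℕ → List ℕ
  | [], stack, out => out ++ stack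
  | a :: rest, stack, out =>
    if bad (a :: stack) then
      match stack with
      | [] => stackAux bad rest [a] out
      | b :: s => stackAux bad (a :: rest) s (out ++ [b])
    else stackAux bad rest (a :: stack) out
  termination_by i s _ => 2 * i.length + s.length
  decreasing_by all_goals (first | omega | (simp [List.length_cons]; try omega))

noncomputable def SCgen (bad : List ℕ → Prop) (π : List ℕ) : List ℕ := stackAux bad π [] []

/-- The consecutive-`σ`-avoiding stack-sorting map. -/
noncomputable def SCc (σ : List ℕ) : List ℕ → List ℕ := SCgen (fun l => ContainsC l σ)

/-- The classical-`σ`-avoiding stack-sorting map. -/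
noncomputable def sCl (σ : List ℕ) : List ℕ → List ℕ := SCgen (fun l => ContainsPat l σ)

/-- `π` is (the one-line notation of) a permutation of `{1, …, n}`. -/
def IsPermList (n : ℕ) (π : List ℕ) : Prop := π.Perm ((List.range n).map (· + 1))

/-- Complementation on permutations of `{1, …, n}`. -/
def compl (n : ℕ) (π : List ℕ) : List ℕ := π.map (fun x => n + 1 - x)

/-- The finset of permutations of `{1, …, n}` in one-line notation. -/
def permsFinset (n : ℕ) : Finset (List ℕ) := ((List.range n).map (· + 1)).permutations.toFinset

/-- The number of preimages of `π` in `S_n` under `f`. -/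
noncomputable def preCount (f : List ℕ → List ℕ) (n : ℕ) (π : List ℕ) : ℕ :=
  ((permsFinset n).filter (fun τ => f τ = π)).card

/-- The number of indices of `π` that are peaks or valleys. -/
noncomputable def pvCount (π : List ℕ) : ℕ :=
  ((Finset.Ico 1 (π.length - 1)).filter (fun i =>
    (π.getD (i - 1) 0 < π.getD i 0 ∧ π.getD (i + 1) 0 < π.getD i 0) ∨
    (π.getD i 0 < π.getD (i - 1) 0 ∧ π.getD i 0 < π.getD (i + 1) 0))).card

/-! ### Auxiliary development -/

/-- Peak-or-valley condition on a triple. -/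
def pvP (x y z : ℕ) : Prop := (x < y ∧ z < y) ∨ (y < x ∧ y < z)

/-- Recursive count of peak/valley windows. -/
noncomputable def pvT : List ℕ → ℕ
  | a :: b :: c :: t => (if pvP a b c then 1 else 0) + pvT (b :: c :: t)
  | _ => 0

lemma pvT_nil : pvT [] = 0 := rfl
lemma pvT_single (a : ℕ) : pvT [a] = 0 := rfl
lemma pvT_pair (a b : ℕ) : pvT [a, b] = 0 := rfl
lemma pvT_cons3 (a b c : ℕ) (t : List ℕ) :
    pvT (a :: b :: c :: t) = (if pvP a b c then 1 else 0) + pvT (b :: c :: t) := rfl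

lemma le_pvT_cons (a : ℕ) (l : List ℕ) : pvT l ≤ pvT (a :: l) := by
  match l with
  | [] => simp [pvT]
  | [b] => simp [pvT]
  | b :: c :: t => rw [pvT_cons3]; omega

lemma le_pvT_append (M T : List ℕ) : pvT T ≤ pvT (M ++ T) := by
  induction M with
  | nil => simp
  | cons a M ih => exact ih.trans (le_pvT_cons a (M ++ T))

lemma sameRel_321 (u : List ℕ) :
    SameRel u [3, 2, 1] ↔ ∃ a b c, u = [a, b, c] ∧ b ≤ a ∧ c ≤ b := by
  constructor
  · rintro ⟨hlen, h⟩
    simp only [List.length_cons, List.length_nil] at hlen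
    match u, hlen with
    | [a, b, c], _ =>
      refine ⟨a, b, c, rfl, ?_, ?_⟩
      · have := h 0 1 (by omega) (by simp)
        simp [List.getD] at this; omega
      · have := h 1 2 (by omega) (by simp)
        simp [List.getD] at this; omega
  · rintro ⟨a, b, c, rfl, hba, hcb⟩
    refine ⟨by simp, ?_⟩
    intro i j hij hj
    simp only [List.length_cons, List.length_nil] at hj
    interval_cases j <;> interval_cases i <;> simp [List.getD] <;> omega

lemma containsC_iff (l : List ℕ) :
    ContainsC l [3, 2, 1] ↔ ∃ p a b c s, l = p ++ a :: b :: c :: s ∧ b ≤ a ∧ c ≤ b := by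
  constructor
  · rintro ⟨u, ⟨p, s, rfl⟩, hrel⟩
    obtain ⟨a, b, c, rfl, hba, hcb⟩ := (sameRel_321 u).1 hrel
    exact ⟨p, a, b, c, s, by simp, hba, hcb⟩
  · rintro ⟨p, a, b, c, s, rfl, hba, hcb⟩
    exact ⟨[a, b, c], ⟨p, s, by simp⟩, (sameRel_321 _).2 ⟨a, b, c, rfl, hba, hcb⟩⟩

lemma not_containsC_short (l : List ℕ) (h : l.length ≤ 2) : ¬ ContainsC l [3, 2, 1] := by
  rw [containsC_iff]
  rintro ⟨p, a, b, c, s, rfl, -, -⟩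
  simp [List.length_append] at h; omega

lemma containsC_cons_iff (a : ℕ) (l : List ℕ) :
    ContainsC (a :: l) [3, 2, 1] ↔
      (∃ b c t, l = b :: c :: t ∧ b ≤ a ∧ c ≤ b) ∨ ContainsC l [3, 2, 1] := by
  rw [containsC_iff, containsC_iff]
  constructor
  · rintro ⟨p, x, y, z, s, heq, hyx, hzy⟩
    match p, heq with
    | [], heq =>
      simp only [List.nil_append, List.cons.injEq] at heq
      exact Or.inl ⟨y, z, s, heq.2, heq.1 ▸ hyx, hzy⟩
    | q :: p', heq =>
      simp only [List.cons_append, List.cons.injEq] at heq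
      exact Or.inr ⟨p', x, y, z, s, heq.2, hyx, hzy⟩
  · rintro (⟨b, c, t, rfl, hba, hcb⟩ | ⟨p, x, y, z, s, rfl, hyx, hzy⟩)
    · exact ⟨[], a, b, c, t, rfl, hba, hcb⟩
    · exact ⟨a :: p, x, y, z, s, rfl, hyx, hzy⟩
lemma pvCount_eq_filter (π : List ℕ) :
    pvCount π = ((Finset.Ico 1 (π.length - 1)).filter
      (fun i => pvP (π.getD (i - 1) 0) (π.getD i 0) (π.getD (i + 1) 0))).card := by
  unfold pvCount pvP
  congr 1
  exact (Finset.filter_congr_decidable _ _ _).symm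

lemma card_filter_Ico_shift (P P' : ℕ → Prop) (m : ℕ) (h : ∀ n, P' (n + 2) ↔ P (n + 1)) :
    ((Finset.Ico 2 m).filter P').card = ((Finset.Ico 1 (m - 1)).filter P).card := by
  refine Finset.card_bij' (fun j _ => j - 1) (fun i _ => i + 1) ?_ ?_ ?_ ?_
  · intro x hx
    simp only [Finset.mem_filter, Finset.mem_Ico] at hx ⊢
    obtain ⟨n, rfl⟩ : ∃ n, x = n + 2 := ⟨x - 2, by omega⟩
    exact ⟨by omega, (h n).1 hx.2⟩
  · intro x hx
    simp only [Finset.mem_filter, Finset.mem_Ico] at hx ⊢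
    obtain ⟨n, rfl⟩ : ∃ n, x = n + 1 := ⟨x - 1, by omega⟩
    exact ⟨by omega, (h n).2 hx.2⟩
  · intro x hx
    simp only [Finset.mem_filter, Finset.mem_Ico] at hx
    show x - 1 + 1 = x
    omega
  · intro x hx
    simp only [Finset.mem_filter, Finset.mem_Ico] at hx
    show x + 1 - 1 = x
    omega

lemma card_filter_Ico_split (P : ℕ → Prop) (m : ℕ) (hm : 2 ≤ m) :
    ((Finset.Ico 1 m).filter P).card
      = (if P 1 then 1 else 0) + ((Finset.Ico 2 m).filter P).card := by
  have hsplit : Finset.Ico 1 m = insert 1 (Finset.Ico 2 m) := by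
    ext x; simp only [Finset.mem_Ico, Finset.mem_insert]; omega
  rw [hsplit, Finset.filter_insert]
  by_cases hc : P 1
  · rw [if_pos hc, if_pos hc, Finset.card_insert_of_notMem (by simp [Finset.mem_filter])]
    omega
  · rw [if_neg hc, if_neg hc]; omega

lemma pvCount_cons (a : ℕ) (l : List ℕ) :
    pvCount (a :: l) =
      (if 2 ≤ l.length ∧ pvP a (l.getD 0 0) (l.getD 1 0) then 1 else 0) + pvCount l := by
  rw [pvCount_eq_filter, pvCount_eq_filter]
  have hlen : (a :: l).length - 1 = l.length := by simp
  rw [hlen]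
  rcases le_or_gt 2 l.length with hm | hm
  · rw [card_filter_Ico_split _ _ hm, card_filter_Ico_shift
      (P := fun i => pvP (l.getD (i - 1) 0) (l.getD i 0) (l.getD (i + 1) 0)) (m := l.length)
      (h := by intro n; simp)]
    congr 1
    simp [hm, List.getElem?_eq_getElem (show 1 < l.length by omega)]
  · have h1 : Finset.Ico 1 l.length = ∅ := Finset.Ico_eq_empty (by omega)
    have h2 : Finset.Ico 1 (l.length - 1) = ∅ := Finset.Ico_eq_empty (by omega)
    rw [h1, h2, if_neg (fun h => absurd h.1 (by omega))]
    simp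

lemma pvCount_eq_pvT (l : List ℕ) : pvCount l = pvT l := by
  induction l with
  | nil => simp [pvCount_eq_filter, pvT]
  | cons a l ih =>
    rw [pvCount_cons, ih]
    match l with
    | [] => simp [pvT]
    | [b] => simp [pvT]
    | b :: c :: t =>
      rw [pvT_cons3]
      simp only [List.getD_cons_zero, List.getD_cons_succ, List.length_cons]
      congr 1
      have h2 : 2 ≤ t.length + 1 + 1 := by omega
      simp [h2]
/-- The bad-stack predicate for consecutive 321. -/
def Bd (l : List ℕ) : Prop := ContainsC l [3, 2, 1]

lemma not_bd_cons (a : ℕ) (l : List ℕ) (hl : ¬ Bd l)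
    (h : ∀ b c t, l = b :: c :: t → ¬ (b ≤ a ∧ c ≤ b)) : ¬ Bd (a :: l) := by
  unfold Bd at *
  rw [containsC_cons_iff]
  rintro (⟨b, c, t, heq, hba, hcb⟩ | hc)
  · exact h b c t heq ⟨hba, hcb⟩
  · exact hl hc

lemma bd_of_triple (a b c : ℕ) (t : List ℕ) (hba : b ≤ a) (hcb : c ≤ b) :
    Bd (a :: b :: c :: t) := by
  unfold Bd
  rw [containsC_cons_iff]
  exact Or.inl ⟨b, c, t, rfl, hba, hcb⟩

/-- Middle part of a run. -/
def midR (r : List ℕ) : List ℕ := r.tail.dropLast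

/-- Reversed end-pair of a run. -/
def rendR : List ℕ → List ℕ
  | [] => []
  | [a] => [a]
  | a :: b :: t => [(b :: t).getLastD 0, a]

lemma stackAux_nil (bad : List ℕ → Prop) (s o : List ℕ) : stackAux bad [] s o = o ++ s := by
  rw [stackAux.eq_def]

lemma stackAux_push (bad : List ℕ → Prop) (a : ℕ) (r s o : List ℕ) (h : ¬ bad (a :: s)) :
    stackAux bad (a :: r) s o = stackAux bad r (a :: s) o := by
  rw [stackAux.eq_def]; simp [h]

lemma stackAux_pop (bad : List ℕ → Prop) (a b : ℕ) (r s o : List ℕ) (h : bad (a :: b :: s)) :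
    stackAux bad (a :: r) (b :: s) o = stackAux bad (a :: r) s (o ++ [b]) := by
  rw [stackAux.eq_def]; simp [h]

/-- Processing the tail of a run with its first element `y` on the stack. -/
lemma machine_run_tail : ∀ (zs : List ℕ) (y : ℕ) (S out rest : List ℕ),
    ¬ Bd (y :: S) → (S = [] ∨ ∃ s0 S', S = s0 :: S' ∧ y < s0) →
    List.Chain' (· < ·) (y :: zs) →
    stackAux Bd (zs ++ rest) (y :: S) out =
      (if zs = [] then stackAux Bd rest (y :: S) out
       else stackAux Bd rest (zs.getLastD 0 :: y :: S) (out ++ zs.dropLast))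
  | [], y, S, out, rest, _, _, _ => by simp
  | z :: zs', y, S, out, rest, hS, hhd, hch => by
    have hyz : y < z := List.isChain_cons_cons.1 hch |>.1
    have hpush : ¬ Bd (z :: y :: S) := by
      apply not_bd_cons _ _ hS
      rintro b c t heq hbc
      rcases hhd with rfl | ⟨s0, S', rfl, hys0⟩
      · simp at heq
      · injection heq with h1 h2
        injection h2 with h3 h4
        omega
    rw [List.cons_append, stackAux_push _ _ _ _ _ hpush]
    match zs' with
    | [] => simp
    | z' :: zs'' =>
      have hzz' : z < z' := (List.isChain_cons_cons.1 (List.isChain_cons_cons.1 hch).2).1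
      have hpop : Bd (z' :: z :: y :: S) := bd_of_triple _ _ _ _ (le_of_lt hzz') (le_of_lt hyz)
      rw [List.cons_append, stackAux_pop _ _ _ _ _ _ hpop, ← List.cons_append]
      have hch' : List.Chain' (· < ·) (y :: z' :: zs'') := by
        refine List.isChain_cons_cons.2 ?_
        exact ⟨hyz.trans hzz', (List.isChain_cons_cons.1 (List.isChain_cons_cons.1 hch).2).2⟩
      rw [machine_run_tail (z' :: zs'') y S (out ++ [z]) rest hS hhd hch']
      simp only [if_neg (List.cons_ne_nil z' zs'')]
      have h1 : (z :: z' :: zs'').getLastD 0 = (z' :: zs'').getLastD 0 := by simp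
      have h2 : (z :: z' :: zs'').dropLast = z :: (z' :: zs'').dropLast := by simp
      rw [if_neg (List.cons_ne_nil z (z' :: zs'')), h1, h2]
      simp
lemma not_bd_short (l : List ℕ) (h : l.length ≤ 2) : ¬ Bd l := not_containsC_short l h

/-- Processing a whole run. -/
lemma machine_run (x : ℕ) (xs S out rest : List ℕ)
    (hch : List.Chain' (· < ·) (x :: xs))
    (hS : ¬ Bd S) (hhd : S = [] ∨ ∃ s0 S', S = s0 :: S' ∧ x < s0) :
    stackAux Bd ((x :: xs) ++ rest) S out =
      stackAux Bd rest (rendR (x :: xs) ++ S) (out ++ midR (x :: xs)) := by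
  have hpush : ¬ Bd (x :: S) := by
    apply not_bd_cons _ _ hS
    rintro b c t heq hbc
    rcases hhd with rfl | ⟨s0, S', rfl, hxs0⟩
    · simp at heq
    · injection heq with h1 h2
      omega
  rw [List.cons_append, stackAux_push _ _ _ _ _ hpush]
  rw [machine_run_tail xs x S out rest hpush hhd hch]
  match xs with
  | [] => simp [rendR, midR]
  | b :: t => simp [rendR, midR]

lemma not_bd_rendR_append (r S : List ℕ) (hr : r ≠ []) (hasc : List.Chain' (· < ·) r)
    (hS : ¬ Bd S) (hhd : S = [] ∨ ∃ s0 S', S = s0 :: S' ∧ r.headD 0 < s0) :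
    ¬ Bd (rendR r ++ S) := by
  match r with
  | [x] =>
    simp only [rendR, List.cons_append, List.nil_append]
    apply not_bd_cons _ _ hS
    rintro b c t heq hbc
    rcases hhd with rfl | ⟨s0, S', rfl, hxs0⟩
    · simp at heq
    · injection heq with h1 h2
      simp only [List.headD_cons] at hxs0
      omega
  | x :: b :: t =>
    simp only [rendR, List.cons_append, List.nil_append]
    have hx : ¬ Bd (x :: S) := by
      apply not_bd_cons _ _ hS
      rintro b' c' t' heq hbc
      rcases hhd with rfl | ⟨s0, S', rfl, hxs0⟩
      · simp at heq
      · injection heq with h1 h2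
        simp only [List.headD_cons] at hxs0
        omega
    apply not_bd_cons _ _ hx
    rintro b' c' t' heq hbc
    injection heq with h1 h2
    subst h1
    rcases hhd with rfl | ⟨s0, S', rfl, hxs0⟩
    · simp at h2
    · injection h2 with h3 h4
      simp only [List.headD_cons] at hxs0
      omega

lemma rendR_headD (r : List ℕ) (hr : r ≠ []) : (rendR r).headD 0 = r.getLastD 0 := by
  match r with
  | [x] => simp [rendR]
  | x :: b :: t => simp [rendR]

lemma rendR_ne_nil (r : List ℕ) (hr : r ≠ []) : rendR r ≠ [] := by
  match r with
  | [x] => simp [rendR]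
  | x :: b :: t => simp [rendR]

/-- The main machine lemma. -/
lemma machine_main : ∀ (R : List (List ℕ)) (S out : List ℕ),
    (∀ r ∈ R, r ≠ []) → (∀ r ∈ R, List.Chain' (· < ·) r) →
    List.Chain' (fun r s => s.headD 0 < r.getLastD 0) R →
    ¬ Bd S →
    (R = [] ∨ S = [] ∨ ∃ s0 S', S = s0 :: S' ∧ (R.headD []).headD 0 < s0) →
    stackAux Bd R.flatten S out = out ++ R.flatMap midR ++ (R.reverse.flatMap rendR ++ S)
  | [], S, out, _, _, _, hS, _ => by simp [stackAux_nil]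
  | r :: R', S, out, hne, hasc, hbd, hS, hhd => by
    obtain ⟨x, xs, rfl⟩ : ∃ x xs, r = x :: xs := by
      match r, hne r (by simp) with
      | y :: ys, _ => exact ⟨y, ys, rfl⟩
    have hhd' : S = [] ∨ ∃ s0 S', S = s0 :: S' ∧ x < s0 := by
      rcases hhd with h | h | ⟨s0, S', rfl, hlt⟩
      · simp at h
      · exact Or.inl h
      · exact Or.inr ⟨s0, S', rfl, by simpa using hlt⟩
    rw [List.flatten_cons, machine_run x xs S out _ (hasc _ (by simp)) hS hhd']
    have hS' : ¬ Bd (rendR (x :: xs) ++ S) :=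
      not_bd_rendR_append _ _ (by simp) (hasc _ (by simp)) hS
        (by rcases hhd' with h | ⟨s0, S', rfl, hlt⟩
            · exact Or.inl h
            · exact Or.inr ⟨s0, S', rfl, by simpa using hlt⟩)
    obtain ⟨e0, es, he⟩ : ∃ e0 es, rendR (x :: xs) = e0 :: es := by
      match hr : rendR (x :: xs), rendR_ne_nil (x :: xs) (by simp) with
      | e :: es', _ => exact ⟨e, es', rfl⟩
    have he0 : e0 = (x :: xs).getLastD 0 := by
      have := rendR_headD (x :: xs) (by simp)
      rw [he] at this
      simp at this
      rw [List.getLastD_eq_getLast?]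
      exact this
    have hhd'' : R' = [] ∨ rendR (x :: xs) ++ S = [] ∨
        ∃ s0 S', rendR (x :: xs) ++ S = s0 :: S' ∧ (R'.headD []).headD 0 < s0 := by
      match R' with
      | [] => exact Or.inl rfl
      | w :: R'' =>
        refine Or.inr (Or.inr ⟨e0, es ++ S, by rw [he]; simp, ?_⟩)
        rw [he0]
        exact (List.isChain_cons_cons.1 hbd).1
    rw [machine_main R' (rendR (x :: xs) ++ S) (out ++ midR (x :: xs))
      (fun r hr => hne r (by simp [hr])) (fun r hr => hasc r (by simp [hr]))
      hbd.tail hS' hhd'']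
    simp [List.flatMap_append, List.append_assoc]
/-- Decomposition into maximal ascending runs. -/
def runsF : List ℕ → List (List ℕ)
  | [] => []
  | [a] => [[a]]
  | a :: b :: l =>
    if a < b then
      match runsF (b :: l) with
      | [] => [[a]]
      | r :: rs => (a :: r) :: rs
    else [a] :: runsF (b :: l)

lemma runsF_spec : ∀ l : List ℕ, List.Chain' (· ≠ ·) l →
    (runsF l).flatten = l ∧
    (∀ r ∈ runsF l, r ≠ []) ∧
    (∀ r ∈ runsF l, List.Chain' (· < ·) r) ∧
    List.Chain' (fun r s => s.headD 0 < r.getLastD 0) (runsF l) ∧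
    (l = [] ∨ ∃ r rs, runsF l = (l.headD 0 :: r) :: rs)
  | [], _ => by simp [runsF, List.Chain']
  | [a], _ => by simp [runsF, List.Chain']
  | a :: b :: l, hch => by
    have hab : a ≠ b := (List.isChain_cons_cons.1 hch).1
    obtain ⟨hflat, hne, hasc, hbd, hhd⟩ := runsF_spec (b :: l) (List.isChain_cons_cons.1 hch).2
    obtain ⟨r, rs, hr⟩ : ∃ r rs, runsF (b :: l) = (b :: r) :: rs := by
      rcases hhd with h | ⟨r, rs, h⟩
      · simp at h
      · exact ⟨r, rs, by simpa using h⟩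
    by_cases hlt : a < b
    · have : runsF (a :: b :: l) = (a :: b :: r) :: rs := by
        rw [runsF, if_pos hlt, hr]
      rw [this]
      refine ⟨?_, ?_, ?_, ?_, ?_⟩
      · rw [hr] at hflat
        simpa using hflat
      · intro t ht
        rcases List.mem_cons.1 ht with rfl | ht
        · simp
        · exact hne t (by rw [hr]; exact List.mem_cons_of_mem _ ht)
      · intro t ht
        rcases List.mem_cons.1 ht with rfl | ht
        · exact List.isChain_cons_cons.2 ⟨hlt, hasc _ (by rw [hr]; simp)⟩
        · exact hasc t (by rw [hr]; exact List.mem_cons_of_mem _ ht)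
      · rw [hr] at hbd
        match rs, hbd with
        | [], _ => simp [List.Chain']
        | s :: rs', hbd =>
          refine List.isChain_cons_cons.2 ⟨?_, (List.isChain_cons_cons.1 hbd).2⟩
          have := (List.isChain_cons_cons.1 hbd).1
          simpa using this
      · exact Or.inr ⟨b :: r, rs, by simp⟩
    · have hba : b < a := by omega
      have : runsF (a :: b :: l) = [a] :: runsF (b :: l) := by
        rw [runsF, if_neg hlt]
      rw [this]
      refine ⟨by simpa using hflat, ?_, ?_, ?_, ?_⟩
      · intro t ht
        rcases List.mem_cons.1 ht with rfl | ht
        · simp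
        · exact hne t ht
      · intro t ht
        rcases List.mem_cons.1 ht with rfl | ht
        · simp [List.Chain']
        · exact hasc t ht
      · rw [hr]
        rw [hr] at hbd
        exact List.isChain_cons_cons.2 ⟨by simpa using hba, hbd⟩
      · exact Or.inr ⟨[], runsF (b :: l), by simp⟩
/-- Runs of length at least 2. -/
def pp (r : List ℕ) : Bool := decide (2 ≤ r.length)

lemma asc_pvT : ∀ l : List ℕ, List.Chain' (· < ·) l → pvT l = 0
  | [], _ => rfl
  | [_], _ => rfl
  | [_, _], _ => rfl
  | a :: b :: c :: t, h => by
    have h1 : a < b := (List.isChain_cons_cons.1 h).1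
    have h2 : b < c := (List.isChain_cons_cons.1 (List.isChain_cons_cons.1 h).2).1
    rw [pvT_cons3, if_neg (by unfold pvP; omega), asc_pvT (b :: c :: t) (List.isChain_cons_cons.1 h).2]

lemma asc_head_lt_last : ∀ (a b : ℕ) (t : List ℕ), List.Chain' (· < ·) (a :: b :: t) →
    a < (b :: t).getLastD 0
  | a, b, [], h => by simpa using (List.isChain_cons_cons.1 h).1
  | a, b, c :: t', h => by
    have h1 : a < b := (List.isChain_cons_cons.1 h).1
    have h2 := asc_head_lt_last b c t' (List.isChain_cons_cons.1 h).2
    simpa using h1.trans h2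

lemma run_prepend_le : ∀ (u X : List ℕ), u ≠ [] → List.Chain' (· < ·) u →
    pvT (u ++ X) ≤ pvT (u.getLastD 0 :: X) + (if 2 ≤ u.length then 1 else 0)
  | [a], X, _, _ => by simp
  | [a, b], X, _, hch => by
    match X with
    | [] => simp [pvT]
    | x :: X' =>
      show pvT (a :: b :: x :: X') ≤ pvT (b :: x :: X') + if 2 ≤ ([a,b] : List ℕ).length then 1 else 0
      rw [pvT_cons3, if_pos (show (2:ℕ) ≤ ([a, b] : List ℕ).length by simp only [List.length_cons, List.length_nil]; omega)]
      split <;> omega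
  | a :: b :: c :: u'', X, _, hch => by
    have hrec := run_prepend_le (b :: c :: u'') X (by simp) (List.isChain_cons_cons.1 hch).2
    have h0 : pvP a b c = False := by
      have h1 : a < b := (List.isChain_cons_cons.1 hch).1
      have h2 : b < c := (List.isChain_cons_cons.1 (List.isChain_cons_cons.1 hch).2).1
      unfold pvP
      simp only [eq_iff_iff, iff_false]
      omega
    show pvT (a :: b :: c :: (u'' ++ X)) ≤ _
    rw [pvT_cons3, h0]
    simp only [if_false]
    have he1 : pvT (b :: c :: (u'' ++ X)) = pvT ((b :: c :: u'') ++ X) := by simp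
    have he2 : (a :: b :: c :: u'').getLastD 0 = (b :: c :: u'').getLastD 0 := by simp
    rw [he1, he2, if_pos (by simp)]
    rw [if_pos (by simp)] at hrec
    omega

lemma main_le : ∀ (R : List (List ℕ)),
    (∀ r ∈ R, r ≠ []) → (∀ r ∈ R, List.Chain' (· < ·) r) →
    List.Chain' (fun r s => s.headD 0 < r.getLastD 0) R →
    pvT R.flatten ≤ R.dropLast.countP pp + R.tail.countP pp
  | [], _, _, _ => by simp [pvT]
  | [u], hne, hasc, _ => by
    simp only [List.flatten, List.append_nil, List.append_eq, List.dropLast_singleton, List.tail_cons]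
    rw [asc_pvT u (hasc u (by simp))]
    simp
  | u :: v :: R', hne, hasc, hbd => by
    have hrec := main_le (v :: R') (fun r hr => hne r (by simp [hr]))
      (fun r hr => hasc r (by simp [hr])) hbd.tail
    obtain ⟨b, v2, rfl⟩ : ∃ b v2, v = b :: v2 := by
      match v, hne v (by simp) with
      | y :: ys, _ => exact ⟨y, ys, rfl⟩
    have hWeq : (u :: (b :: v2) :: R').flatten = u ++ ((b :: v2) :: R').flatten := by simp
    rw [hWeq]
    have hL1 := run_prepend_le u (((b :: v2) :: R').flatten) (hne u (by simp)) (hasc u (by simp))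
    have hblu : b < u.getLastD 0 := by
      have := (List.isChain_cons_cons.1 hbd).1
      simpa using this
    have hstep : pvT (u.getLastD 0 :: ((b :: v2) :: R').flatten) ≤
        pvT (((b :: v2) :: R').flatten) + (if 2 ≤ (b :: v2).length then 1 else 0) := by
      have hflat : ((b :: v2) :: R').flatten = b :: (v2 ++ R'.flatten) := by simp
      rw [hflat]
      match hv2 : v2 ++ R'.flatten with
      | [] => simp [pvT]
      | c :: Y' =>
        rw [show pvT (u.getLastD 0 :: b :: c :: Y') =
          (if pvP (u.getLastD 0) b c then 1 else 0) + pvT (b :: c :: Y') from pvT_cons3 _ _ _ _]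
        rcases v2 with _ | ⟨v21, v22⟩
        case cons =>
          rw [if_pos (show (2:ℕ) ≤ (b :: v21 :: v22).length by simp only [List.length_cons]; omega)]
          split <;> omega
        case nil =>
          -- v = [b], so c is the head of the first run of R'
          simp only [List.nil_append] at hv2
          have hcb : c < b := by
            rcases R' with _ | ⟨w, R''⟩
            · simp at hv2
            · 
              obtain ⟨w0, wt, rfl⟩ : ∃ w0 wt, w = w0 :: wt := by
                match w, hne w (by simp) with
                | y :: ys, _ => exact ⟨y, ys, rfl⟩
              have hflat2 : ((w0 :: wt) :: R'').flatten = w0 :: (wt ++ R''.flatten) := by simp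
              rw [hflat2] at hv2
              injection hv2 with h1 h2
              have := (List.isChain_cons_cons.1 hbd.tail).1
              simp at this
              omega
          have : pvP (u.getLastD 0) b c = False := by
            unfold pvP
            simp only [eq_iff_iff, iff_false]
            omega
          rw [this]
          simp
    have htarget1 : (u :: (b :: v2) :: R').dropLast.countP pp
        = (if pp u then 1 else 0) + ((b :: v2) :: R').dropLast.countP pp := by
      rw [List.dropLast_cons₂, List.countP_cons]
      omega
    have htarget2 : ((u :: (b :: v2) :: R').tail).countP pp
        = (if pp (b :: v2) then 1 else 0) + R'.countP pp := by
      simp only [List.tail_cons, List.countP_cons]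
      omega
    have hppu : (if 2 ≤ u.length then 1 else 0) = (if pp u then 1 else 0) := by
      unfold pp; by_cases h : 2 ≤ u.length <;> simp [h]
    have hppv : (if 2 ≤ (b :: v2).length then 1 else 0) = (if pp (b :: v2) then 1 else 0) := by
      unfold pp; by_cases h : 2 ≤ (b :: v2).length <;> simp [h]
    have hrecs : ((b :: v2) :: R').dropLast.countP pp + R'.countP pp
        = ((b :: v2) :: R').dropLast.countP pp + (((b :: v2) :: R').tail).countP pp := by
      simp
    omega
lemma tail_ge : ∀ (S : List (List ℕ)),
    (∀ r ∈ S, r ≠ []) → (∀ r ∈ S, List.Chain' (· < ·) r) →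
    List.Chain' (fun u v => u.headD 0 < v.getLastD 0) S →
    S.tail.countP pp + S.dropLast.countP pp ≤ pvT (S.flatMap rendR)
  | [], _, _, _ => by simp
  | [u], _, _, _ => by simp
  | u :: v :: S', hne, hasc, hbd => by
    have hrec := tail_ge (v :: S') (fun r hr => hne r (by simp [hr]))
      (fun r hr => hasc r (by simp [hr])) hbd.tail
    have hcuv : u.headD 0 < v.getLastD 0 := (List.isChain_cons_cons.1 hbd).1
    have hXeq : (u :: v :: S').flatMap rendR = rendR u ++ (v :: S').flatMap rendR := by
      simp
    rw [hXeq]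
    set X := (v :: S').flatMap rendR with hX
    obtain ⟨b, vt, rfl⟩ : ∃ b vt, v = b :: vt := by
      match v, hne v (by simp) with
      | y :: ys, _ => exact ⟨y, ys, rfl⟩
    obtain ⟨a, ut, rfl⟩ : ∃ a ut, u = a :: ut := by
      match u, hne u (by simp) with
      | y :: ys, _ => exact ⟨y, ys, rfl⟩
    simp only [List.headD_cons] at hcuv
    rcases vt with _ | ⟨v1, vt'⟩
    · -- v = [b] : X = b :: XS, pp v = false
      simp only [List.getLastD_cons, List.getLastD_nil] at hcuv
      have hXb : X = b :: (S'.flatMap rendR) := by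
        rw [hX]; simp [rendR]
      have hppv : pp [b] = false := by unfold pp; simp
      rcases ut with _ | ⟨u1, ut'⟩
      · -- u = [a]
        have hppu : pp [a] = false := by unfold pp; simp
        have hrend : rendR [a] ++ X = a :: X := by simp [rendR]
        rw [hrend]
        have hval := le_pvT_cons a X
        simp only [List.tail_cons, List.dropLast_cons₂, List.countP_cons, hppu, hppv,
          Bool.false_eq_true, if_false, if_true] at hrec ⊢
        omega
      · -- u = a :: u1 :: ut'
        have hppu : pp (a :: u1 :: ut') = true := by unfold pp; simp
        have hlu : a < (u1 :: ut').getLastD 0 := asc_head_lt_last a u1 ut' (hasc _ (by simp))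
        have hrend : rendR (a :: u1 :: ut') ++ X = (u1 :: ut').getLastD 0 :: a :: X := by
          simp [rendR]
        rw [hrend]
        have hval : pvT ((u1 :: ut').getLastD 0 :: a :: X) = 1 + pvT (a :: X) := by
          rw [hXb, pvT_cons3, if_pos (show pvP ((u1 :: ut').getLastD 0) a b by unfold pvP; omega)]
        have hval2 := le_pvT_cons a X
        rw [hval]
        simp only [List.tail_cons, List.dropLast_cons₂, List.countP_cons, hppu, hppv,
          Bool.false_eq_true, if_false, if_true] at hrec ⊢
        omega
    · -- v = b :: v1 :: vt' : X = lv :: b :: XS, pp v = true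
      have hlv : b < (v1 :: vt').getLastD 0 := asc_head_lt_last b v1 vt' (hasc _ (by simp))
      have hgl : (b :: v1 :: vt').getLastD 0 = (v1 :: vt').getLastD 0 := by simp
      rw [hgl] at hcuv
      have hXb : X = (v1 :: vt').getLastD 0 :: b :: (S'.flatMap rendR) := by
        rw [hX]; simp [rendR]
      have hppv : pp (b :: v1 :: vt') = true := by unfold pp; simp
      rcases ut with _ | ⟨u1, ut'⟩
      · -- u = [a]
        have hppu : pp [a] = false := by unfold pp; simp
        have hrend : rendR [a] ++ X = a :: X := by simp [rendR]
        rw [hrend]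
        have hval : pvT (a :: X) = 1 + pvT X := by
          rw [hXb, pvT_cons3, if_pos (show pvP a ((v1 :: vt').getLastD 0) b by unfold pvP; omega),
            ← hXb]
        rw [hval]
        simp only [List.tail_cons, List.dropLast_cons₂, List.countP_cons, hppu, hppv,
          Bool.false_eq_true, if_false, if_true] at hrec ⊢
        omega
      · -- u = a :: u1 :: ut'
        have hppu : pp (a :: u1 :: ut') = true := by unfold pp; simp
        have hlu : a < (u1 :: ut').getLastD 0 := asc_head_lt_last a u1 ut' (hasc _ (by simp))
        have hrend : rendR (a :: u1 :: ut') ++ X = (u1 :: ut').getLastD 0 :: a :: X := by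
          simp [rendR]
        rw [hrend]
        have hval : pvT ((u1 :: ut').getLastD 0 :: a :: X) = 2 + pvT X := by
          rw [hXb, pvT_cons3,
            if_pos (show pvP ((u1 :: ut').getLastD 0) a ((v1 :: vt').getLastD 0) by
              unfold pvP; omega),
            pvT_cons3,
            if_pos (show pvP a ((v1 :: vt').getLastD 0) b by unfold pvP; omega)]
          omega
        rw [hval]
        simp only [List.tail_cons, List.dropLast_cons₂, List.countP_cons, hppu, hppv,
          Bool.false_eq_true, if_false, if_true] at hrec ⊢
        omega
/-- g(π) ≤ g(SC_{321}(π)) for every permutation π. -/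
theorem pv_le_pv_sc321 (n : ℕ) (π : List ℕ) (hπ : IsPermList n π) :
    pvCount π ≤ pvCount (SCc [3, 2, 1] π) := by
  have hnodup : π.Nodup := by
    refine hπ.nodup_iff.2 ?_
    exact List.Nodup.map (fun a b h => by omega) (List.nodup_range (n := n))
  have hchain : List.Chain' (· ≠ ·) π := List.Pairwise.isChain hnodup
  obtain ⟨hflat, hne, hasc, hbd, -⟩ := runsF_spec π hchain
  set R := runsF π with hR
  -- the machine computes the run formula
  have hmach : SCc [3, 2, 1] π = R.flatMap midR ++ R.reverse.flatMap rendR := by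
    show stackAux Bd π [] [] = _
    rw [← hflat, machine_main R [] [] hne hasc hbd (not_bd_short [] (by simp))
      (Or.inr (Or.inl rfl))]
    simp
  -- chain condition on the reversed run list
  have hbdrev : List.Chain' (fun u v => u.headD 0 < v.getLastD 0) R.reverse :=
    (List.isChain_reverse).2 hbd
  have htail := tail_ge R.reverse (fun r hr => hne r (List.mem_reverse.1 hr))
    (fun r hr => hasc r (List.mem_reverse.1 hr)) hbdrev
  rw [List.tail_reverse, List.dropLast_reverse, List.countP_reverse, List.countP_reverse] at htail
  have hmain := main_le R hne hasc hbd
  calc pvCount π = pvT R.flatten := by rw [hflat, pvCount_eq_pvT]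
    _ ≤ R.dropLast.countP pp + R.tail.countP pp := hmain
    _ ≤ pvT (R.reverse.flatMap rendR) := htail
    _ ≤ pvT (R.flatMap midR ++ R.reverse.flatMap rendR) := le_pvT_append _ _
    _ = pvCount (SCc [3, 2, 1] π) := by rw [hmach, pvCount_eq_pvT]
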